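/- Fix γ ∈ ℂ and let A_γ be the type (iii) algebra with parameter γ. Then b = −a is a generator of A_γ (i.e. {b, b², b³} is a basis) and b·b³ = b² − γb³. -/

import Mathlib

/-- `lpow μ x k` is the left-normed power `x^(k+1)`; so `lpow μ x 0 = x`,
`lpow μ x 1 = x·x = x²`, `lpow μ x 2 = x·x² = x³`, etc. -/
def lpow {A : Type*} [AddCommGroup A] [Module ℂ A]
    (μ : A →ₗ[ℂ] A →ₗ[ℂ] A) (x : A) : ℕ → A
  | 0 => x
  | n + 1 => μ x (lpow μ x n)
/-- The 3-dimensional cyclic Leibniz algebra of type (iii) with parameter γ: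
A_γ = ℂ³ with basis a = e₀, a² = e₁, a³ = e₂ and multiplication u·v = u₀ • L_a(v),
where L_a(a) = a², L_a(a²) = a³, L_a(a³) = a² + γa³ (so a²·v = a³·v = 0). -/
noncomputable def mulIII (γ : ℂ) : (Fin 3 → ℂ) →ₗ[ℂ] (Fin 3 → ℂ) →ₗ[ℂ] (Fin 3 → ℂ) :=
  (LinearMap.proj 0).smulRight (Matrix.mulVecLin !![0,0,0;1,0,1;0,1,γ])

noncomputable def a : Fin 3 → ℂ := ![1,0,0]
noncomputable def a2 : Fin 3 → ℂ := ![0,1,0]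
noncomputable def a3 : Fin 3 → ℂ := ![0,0,1]

lemma lp0 (γ : ℂ) : lpow (mulIII γ) (-a) 0 = -a := rfl
lemma lp1 (γ : ℂ) : lpow (mulIII γ) (-a) 1 = a2 := by
  show mulIII γ (-a) (-a) = a2
  ext i
  fin_cases i <;>
    simp [mulIII, a, a2, Matrix.mulVec, dotProduct, Fin.sum_univ_three]
lemma lp2 (γ : ℂ) : lpow (mulIII γ) (-a) 2 = -a3 := by
  show mulIII γ (-a) (lpow (mulIII γ) (-a) 1) = -a3
  rw [lp1]
  ext i
  fin_cases i <;>
    simp [mulIII, a, a2, a3, Matrix.mulVec, dotProduct, Fin.sum_univ_three]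

/-- In the type (iii) algebra A_γ, b = −a is a generator of A_γ
(i.e. {b, b², b³} is a basis) and b·b³ = b² − γb³. -/
theorem typeIII_neg_generator (γ : ℂ) :
    (∃ e : Module.Basis (Fin 3) ℂ (Fin 3 → ℂ),
        ∀ i : Fin 3, e i = lpow (mulIII γ) (-a) (i : ℕ)) ∧
    mulIII γ (-a) (lpow (mulIII γ) (-a) 2) =
      lpow (mulIII γ) (-a) 1 - γ • lpow (mulIII γ) (-a) 2 := by
  constructor
  · refine ⟨(Pi.basisFun ℂ (Fin 3)).unitsSMul ![-1, 1, -1], ?_⟩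
    intro i
    fin_cases i
    · show _ = lpow (mulIII γ) (-a) 0
      rw [lp0]; ext j; fin_cases j <;> simp [Module.Basis.unitsSMul_apply, a]
    · show _ = lpow (mulIII γ) (-a) 1
      rw [lp1]; ext j; fin_cases j <;> simp [Module.Basis.unitsSMul_apply, a2]
    · show _ = lpow (mulIII γ) (-a) 2
      rw [lp2]; ext j; fin_cases j <;> simp [Module.Basis.unitsSMul_apply, a3]
  · rw [lp1, lp2]
    ext i
    fin_cases i <;>
      simp [mulIII, a, a2, a3, Matrix.mulVec, dotProduct, Fin.sum_univ_three]
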